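/- Let d ≥ 1, β ∈ (0, 1], and G > 0. For all vectors g, m ∈ ℝ^d with ‖g‖_{(1+β)/β} ≤ G, the alignment inequality ⟨g, Φ_β(m)⟩ ≥ ‖g‖_{1+β}^{1+β} − G · C_β · ‖m − g‖_{1+β}^β holds, where C_β = 2^{1−β}·d^{(1−β)/(1+β)}. -/

import Mathlib

/-- Sum of β-powers bounded by cardinality factor times power of sum. -/
lemma aux_sum_rpow_le {ι : Type*} (s : Finset ι) (f : ι → ℝ) (hf : ∀ i ∈ s, 0 ≤ f i)
    {β : ℝ} (hβ0 : 0 < β) (hβ1 : β ≤ 1) :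
    ∑ i ∈ s, f i ^ β ≤ (s.card : ℝ) ^ (1 - β) * (∑ i ∈ s, f i) ^ β := by
  have hp : 1 ≤ 1 / β := by rw [le_div_iff₀ hβ0]; linarith
  have h := Real.inner_le_weight_mul_Lp_of_nonneg s hp (fun _ => 1)
      (fun i => |f i| ^ β) (fun _ => zero_le_one) (fun i => by positivity)
  simp only [one_mul, Finset.sum_const, nsmul_eq_mul, mul_one, one_div, inv_inv] at h
  have h1 : ∀ i ∈ s, (|f i| ^ β) ^ β⁻¹ = f i := by
    intro i hi
    rw [← Real.rpow_mul (abs_nonneg _), mul_inv_cancel₀ hβ0.ne', Real.rpow_one,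
      abs_of_nonneg (hf i hi)]
  have h2 : ∀ i ∈ s, |f i| ^ β = f i ^ β := by
    intro i hi; rw [abs_of_nonneg (hf i hi)]
  calc ∑ i ∈ s, f i ^ β = ∑ i ∈ s, |f i| ^ β := (Finset.sum_congr rfl h2).symm
    _ ≤ (s.card : ℝ) ^ (1 - β⁻¹⁻¹) * (∑ i ∈ s, (|f i| ^ β) ^ β⁻¹) ^ β⁻¹⁻¹ := by
        simpa using h
    _ = (s.card : ℝ) ^ (1 - β) * (∑ i ∈ s, f i) ^ β := by
        rw [inv_inv, Finset.sum_congr rfl h1]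

/-- Real version of subadditivity of `x ↦ x^β` for `β ≤ 1`. -/
lemma aux_rpow_add_le {β : ℝ} (hβ0 : 0 ≤ β) (hβ1 : β ≤ 1) {a b : ℝ} (ha : 0 ≤ a) (hb : 0 ≤ b) :
    (a + b) ^ β ≤ a ^ β + b ^ β := by
  have h := NNReal.rpow_add_le_add_rpow a.toNNReal b.toNNReal hβ0 hβ1
  have := NNReal.coe_le_coe.2 h
  push_cast at this
  rwa [Real.coe_toNNReal a ha, Real.coe_toNNReal b hb] at this

lemma aux_sub_rpow {β : ℝ} (hβ0 : 0 < β) (hβ1 : β ≤ 1) {a b : ℝ} (ha : 0 ≤ a) (hb : 0 ≤ b) :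
    |a ^ β - b ^ β| ≤ |a - b| ^ β := by
  have key : ∀ x y : ℝ, 0 ≤ y → y ≤ x → x ^ β - y ^ β ≤ (x - y) ^ β := by
    intro x y hy hyx
    have := aux_rpow_add_le hβ0.le hβ1 (by linarith : (0:ℝ) ≤ x - y) hy
    rw [sub_add_cancel] at this
    linarith
  rcases le_total b a with h | h
  · rw [abs_of_nonneg (sub_nonneg.2 (Real.rpow_le_rpow hb h hβ0.le)),
      abs_of_nonneg (sub_nonneg.2 h)]
    exact key a b hb h
  · rw [abs_of_nonpos (sub_nonpos.2 (Real.rpow_le_rpow ha h hβ0.le)),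
      abs_of_nonpos (sub_nonpos.2 h), neg_sub, neg_sub]
    exact key b a ha h

/-- Two-point concavity bound. -/
lemma aux_two_rpow {β : ℝ} (hβ0 : 0 < β) (hβ1 : β ≤ 1) {a b : ℝ} (ha : 0 ≤ a) (hb : 0 ≤ b) :
    a ^ β + b ^ β ≤ 2 ^ (1 - β) * (a + b) ^ β := by
  have h := aux_sum_rpow_le (Finset.univ : Finset (Fin 2)) ![a, b]
      (by intro i _; fin_cases i <;> simpa) hβ0 hβ1
  simpa [Fin.sum_univ_two] using h

lemma aux_phi_nonneg {β : ℝ} (hβ0 : 0 < β) {a : ℝ} (ha : 0 ≤ a) :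
    Real.sign a * |a| ^ β = a ^ β := by
  rcases ha.lt_or_eq with h | h
  · rw [Real.sign_of_pos h, abs_of_pos h, one_mul]
  · rw [← h, Real.sign_zero, zero_mul, Real.zero_rpow hβ0.ne']

lemma aux_phi_neg {β : ℝ} (a : ℝ) :
    Real.sign (-a) * |(-a)| ^ β = -(Real.sign a * |a| ^ β) := by
  rw [Real.sign_neg, abs_neg, neg_mul]

/-- Pointwise Hölder-type bound for the signed power map. -/
lemma aux_phi_diff {β : ℝ} (hβ0 : 0 < β) (hβ1 : β ≤ 1) (a b : ℝ) :
    |Real.sign a * |a| ^ β - Real.sign b * |b| ^ β| ≤ 2 ^ (1 - β) * |a - b| ^ β := by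
  have h2 : (1:ℝ) ≤ 2 ^ (1 - β) := by
    have := Real.rpow_le_rpow_of_exponent_le (one_le_two) (by linarith : (0:ℝ) ≤ 1 - β)
    simpa using this
  have main : ∀ x y : ℝ, 0 ≤ x →
      |Real.sign x * |x| ^ β - Real.sign y * |y| ^ β| ≤ 2 ^ (1 - β) * |x - y| ^ β := by
    intro x y hx
    rcases le_total 0 y with hy | hy
    · rw [aux_phi_nonneg hβ0 hx, aux_phi_nonneg hβ0 hy]
      calc |x ^ β - y ^ β| ≤ |x - y| ^ β := aux_sub_rpow hβ0 hβ1 hx hy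
        _ ≤ 2 ^ (1 - β) * |x - y| ^ β := by nlinarith [Real.rpow_nonneg (abs_nonneg (x - y)) β]
    · have hy' : 0 ≤ -y := by linarith
      have : Real.sign y * |y| ^ β = -((-y) ^ β) := by
        have := aux_phi_neg (β := β) y
        rw [aux_phi_nonneg hβ0 hy'] at this
        linarith
      rw [aux_phi_nonneg hβ0 hx, this, sub_neg_eq_add]
      have hxy : x - y = x + (-y) := by ring
      rw [abs_of_nonneg (by positivity), hxy, abs_of_nonneg (by linarith)]
      exact aux_two_rpow hβ0 hβ1 hx hy'
  rcases le_total 0 a with ha | ha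
  · exact main a b ha
  · have := main (-a) (-b) (by linarith)
    rw [aux_phi_neg, aux_phi_neg, neg_sub_neg, neg_sub_neg] at this
    rw [abs_sub_comm, abs_sub_comm a b]
    exact this

/-- **Deterministic alignment inequality.**
Let `d ≥ 1`, `β ∈ (0,1]`, `G > 0`. For all `g, m : ℝ^d` with `‖g‖_{(1+β)/β} ≤ G`,
`⟨g, Φ_β(m)⟩ ≥ ‖g‖_{1+β}^{1+β} − G · C_β · ‖m − g‖_{1+β}^β`, where
`C_β = 2^(1−β)·d^((1−β)/(1+β))`, `Φ_β(m)_i = sign(m_i)·|m_i|^β` and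
`‖x‖_p = (Σ_i |x_i|^p)^(1/p)`. -/
theorem powerstep_alignment (d : ℕ) (hd : 1 ≤ d) (β : ℝ) (hβ0 : 0 < β) (hβ1 : β ≤ 1)
    (G : ℝ) (hG : 0 < G) (g m : Fin d → ℝ)
    (hg : (∑ i, |g i| ^ ((1 + β) / β)) ^ (β / (1 + β)) ≤ G) :
    ∑ i, g i * (Real.sign (m i) * |m i| ^ β)
      ≥ ∑ i, |g i| ^ (1 + β)
        - G * ((2 : ℝ) ^ (1 - β) * (d : ℝ) ^ ((1 - β) / (1 + β))) *
          ((∑ i, |m i - g i| ^ (1 + β)) ^ ((1 : ℝ) / (1 + β))) ^ β := by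
  have hp0 : (0:ℝ) < 1 + β := by linarith
  set Δ : Fin d → ℝ := fun i => Real.sign (m i) * |m i| ^ β - Real.sign (g i) * |g i| ^ β with hΔdef
  -- Step 1: decompose the sum
  have hgphi : ∀ i, g i * (Real.sign (g i) * |g i| ^ β) = |g i| ^ (1 + β) := by
    intro i
    have hsg : g i * Real.sign (g i) = |g i| := by
      rcases lt_trichotomy (g i) 0 with h | h | h
      · rw [Real.sign_of_neg h, abs_of_neg h]; ring
      · simp [h]
      · rw [Real.sign_of_pos h, abs_of_pos h]; ring
    rw [← mul_assoc, hsg, Real.rpow_add' (abs_nonneg _) (by positivity), Real.rpow_one]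
  have hdecomp : ∑ i, g i * (Real.sign (m i) * |m i| ^ β)
      = ∑ i, |g i| ^ (1 + β) + ∑ i, g i * Δ i := by
    rw [← Finset.sum_add_distrib]
    refine Finset.sum_congr rfl fun i _ => ?_
    rw [← hgphi i, hΔdef]; ring
  -- Step 2: Hölder
  have hconj : Real.HolderConjugate ((1 + β) / β) (1 + β) := by
    refine Real.holderConjugate_iff.mpr ⟨?_, ?_⟩
    · rw [lt_div_iff₀ hβ0]; linarith
    · rw [inv_div]
      field_simp
      ring
  have hHolder := Real.inner_le_Lp_mul_Lq Finset.univ (fun i => |g i|) (fun i => |Δ i|) hconj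
  simp only [abs_abs] at hHolder
  have hone_div : 1 / ((1 + β) / β) = β / (1 + β) := one_div_div _ _
  rw [hone_div] at hHolder
  -- Step 3: bound the Δ norm
  set S : ℝ := ∑ i, |m i - g i| ^ (1 + β) with hSdef
  have hS0 : 0 ≤ S := Finset.sum_nonneg fun i _ => by positivity
  have hΔsum : ∑ i, |Δ i| ^ (1 + β)
      ≤ ((2:ℝ) ^ (1 - β)) ^ (1 + β) * ((d : ℝ) ^ (1 - β) * S ^ β) := by
    have step1 : ∑ i, |Δ i| ^ (1 + β) ≤ ∑ i, ((2:ℝ) ^ (1 - β)) ^ (1 + β) * (|m i - g i| ^ (1 + β)) ^ β := by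
      refine Finset.sum_le_sum fun i _ => ?_
      have h1 : |Δ i| ≤ 2 ^ (1 - β) * |m i - g i| ^ β := aux_phi_diff hβ0 hβ1 _ _
      have h2 := Real.rpow_le_rpow (abs_nonneg _) h1 hp0.le
      calc |Δ i| ^ (1 + β) ≤ (2 ^ (1 - β) * |m i - g i| ^ β) ^ (1 + β) := h2
        _ = ((2:ℝ) ^ (1 - β)) ^ (1 + β) * (|m i - g i| ^ (1 + β)) ^ β := by
            rw [Real.mul_rpow (by positivity) (by positivity),
              ← Real.rpow_mul (abs_nonneg _), ← Real.rpow_mul (abs_nonneg _),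
              mul_comm β (1 + β)]
    calc ∑ i, |Δ i| ^ (1 + β)
        ≤ ∑ i, ((2:ℝ) ^ (1 - β)) ^ (1 + β) * (|m i - g i| ^ (1 + β)) ^ β := step1
      _ = ((2:ℝ) ^ (1 - β)) ^ (1 + β) * ∑ i, (|m i - g i| ^ (1 + β)) ^ β := by
          rw [Finset.mul_sum]
      _ ≤ ((2:ℝ) ^ (1 - β)) ^ (1 + β) * ((d : ℝ) ^ (1 - β) * S ^ β) := by
          have h := aux_sum_rpow_le Finset.univ (fun i => |m i - g i| ^ (1 + β))
            (fun i _ => by positivity) hβ0 hβ1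
          simp only [Finset.card_univ, Fintype.card_fin] at h
          have h20 : (0:ℝ) ≤ ((2:ℝ) ^ (1 - β)) ^ (1 + β) := by positivity
          exact mul_le_mul_of_nonneg_left h h20
  have hsum0 : (0:ℝ) ≤ ∑ i, |Δ i| ^ (1 + β) := Finset.sum_nonneg fun i _ => by positivity
  have hB : (∑ i, |Δ i| ^ (1 + β)) ^ (1 / (1 + β))
      ≤ (2:ℝ) ^ (1 - β) * (d : ℝ) ^ ((1 - β) / (1 + β)) * S ^ (β / (1 + β)) := by
    have h1 := Real.rpow_le_rpow hsum0 hΔsum (by positivity : (0:ℝ) ≤ 1 / (1 + β))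
    refine h1.trans_eq ?_
    rw [← Real.rpow_mul (by norm_num : (0:ℝ) ≤ 2),
      Real.mul_rpow (by positivity) (by positivity),
      Real.mul_rpow (by positivity) (Real.rpow_nonneg hS0 β),
      ← Real.rpow_mul (by norm_num : (0:ℝ) ≤ 2),
      ← Real.rpow_mul (Nat.cast_nonneg d), ← Real.rpow_mul hS0]
    have eX : (1 - β) * (1 + β) * (1 / (1 + β)) = 1 - β := by field_simp
    have eY : (1 - β) * (1 / (1 + β)) = (1 - β) / (1 + β) := by ring
    have eZ : β * (1 / (1 + β)) = β / (1 + β) := by ring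
    rw [eX, eY, eZ]
    ring
  -- Final assembly
  have hB0 : (0:ℝ) ≤ (∑ i, |Δ i| ^ (1 + β)) ^ (1 / (1 + β)) := Real.rpow_nonneg hsum0 _
  have hE : ∑ i, g i * Δ i
      ≥ -(G * ((2:ℝ) ^ (1 - β) * (d : ℝ) ^ ((1 - β) / (1 + β))) * S ^ (β / (1 + β))) := by
    have h1 : -(∑ i, g i * Δ i) ≤ ∑ i, |g i| * |Δ i| := by
      rw [← Finset.sum_neg_distrib]
      refine Finset.sum_le_sum fun i _ => ?_
      calc -(g i * Δ i) ≤ |g i * Δ i| := neg_le_abs _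
        _ = |g i| * |Δ i| := abs_mul _ _
    have h2 : ∑ i, |g i| * |Δ i|
        ≤ G * ((2:ℝ) ^ (1 - β) * (d : ℝ) ^ ((1 - β) / (1 + β)) * S ^ (β / (1 + β))) :=
      hHolder.trans (mul_le_mul hg hB hB0 hG.le)
    have h3 : G * ((2:ℝ) ^ (1 - β) * (d : ℝ) ^ ((1 - β) / (1 + β)) * S ^ (β / (1 + β)))
        = G * ((2:ℝ) ^ (1 - β) * (d : ℝ) ^ ((1 - β) / (1 + β))) * S ^ (β / (1 + β)) := by ring
    linarith
  have hT : (S ^ ((1:ℝ) / (1 + β))) ^ β = S ^ (β / (1 + β)) := by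
    rw [← Real.rpow_mul hS0]
    congr 1
    ring
  rw [hdecomp, hT]
  linarith
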